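/- Let K be a field of characteristic zero, n, m > 1 integers, and suppose n | m or m | n. Then there exist no monic polynomials p, q ∈ K[x] with deg p = n, deg q = m satisfying m p' q − n p q' = c for any c ∈ K^×. -/

import Mathlib

open Polynomial

private lemma key4 (K : Type*) [Field K] [CharZero K] (n m k : ℕ)
    (hn : 1 < n) (hm : 1 < m) (hk : m = n * k) (p q : Polynomial K) (c : K)
    (hp : p.Monic) (hq : q.Monic) (hpn : p.natDegree = n) (hqm : q.natDegree = m)
    (hc : c ≠ 0)
    (heq : (m : Polynomial K) * p.derivative * q - (n : Polynomial K) * p * q.derivative =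
        Polynomial.C c) : False := by
  have hk1 : 1 ≤ k := by
    rcases Nat.eq_zero_or_pos k with h | h
    · subst h; omega
    · exact h
  set s : Polynomial K := q - p ^ k with hs
  have hqs : q = p ^ k + s := by rw [hs]; ring
  have hpk : p ^ (k - 1) * p = p ^ k := by
    rw [← pow_succ]; congr 1; omega
  have heq2 : (m : Polynomial K) * p.derivative * s - (n : Polynomial K) * p * s.derivative =
      Polynomial.C c := by
    rw [← heq, hqs, derivative_add, derivative_pow]
    have hm' : (m : Polynomial K) = (n : Polynomial K) * (k : Polynomial K) := by
      rw [hk]; push_cast; ring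
    rw [hm', C_eq_natCast]
    linear_combination ((n : Polynomial K) * (k : Polynomial K) * p.derivative) * hpk
  have hs0 : s ≠ 0 := by
    intro h
    apply hc
    rw [h] at heq2
    simp only [derivative_zero, mul_zero, sub_zero] at heq2
    exact C_eq_zero.mp heq2.symm
  set d := s.natDegree with hd
  have hdm : d < m := by
    have hdeg : (q - p ^ k).degree < q.degree := by
      apply degree_sub_lt
      · rw [degree_eq_natDegree hq.ne_zero, degree_eq_natDegree (hp.pow k).ne_zero,
          hp.natDegree_pow, hqm, hpn, hk, Nat.mul_comm]
      · exact hq.ne_zero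
      · rw [hq.leadingCoeff, (hp.pow k).leadingCoeff]
    have := natDegree_lt_natDegree hs0 (hs ▸ hdeg)
    omega
  have hlc : s.leadingCoeff ≠ 0 := leadingCoeff_ne_zero.mpr hs0
  have hcn : p.coeff n = 1 := by rw [← hpn]; exact hp.coeff_natDegree
  have hsl : s.coeff d = s.leadingCoeff := coeff_natDegree
  have h1 : (p.derivative * s).coeff (n - 1 + d) = (n : K) * s.leadingCoeff := by
    have hdp : p.derivative.natDegree ≤ n - 1 := hpn ▸ natDegree_derivative_le p
    rw [coeff_mul_add_eq_of_natDegree_le hdp le_rfl, coeff_derivative]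
    have h' : n - 1 + 1 = n := by omega
    rw [h', hcn, ← hd, hsl]
    have hc1 : ((n - 1 : ℕ) : K) + 1 = (n : K) := by
      rw [Nat.cast_sub (by omega)]; ring
    rw [hc1]; ring
  have h2 : (p * s.derivative).coeff (n - 1 + d) = (d : K) * s.leadingCoeff := by
    rcases Nat.eq_zero_or_pos d with h0 | h0
    · have hsz : s.natDegree = 0 := by omega
      obtain ⟨a, ha⟩ := natDegree_eq_zero.mp hsz
      rw [← ha, derivative_C, mul_zero, coeff_zero, h0]
      simp
    · have h' : n - 1 + d = n + (d - 1) := by omega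
      rw [h', coeff_mul_add_eq_of_natDegree_le hpn.le
        ((natDegree_derivative_le s).trans le_rfl), coeff_derivative]
      have h'' : d - 1 + 1 = d := by omega
      rw [h'', hcn, ← hd, hsl]
      have hc1 : ((d - 1 : ℕ) : K) + 1 = (d : K) := by
        rw [Nat.cast_sub (by omega)]; ring
      rw [hc1]; ring
  have hco := congrArg (fun f => f.coeff (n - 1 + d)) heq2
  simp only [coeff_sub, coeff_C] at hco
  rw [if_neg (by omega : ¬ n - 1 + d = 0)] at hco
  have hm2 : (m : Polynomial K) * p.derivative * s = Polynomial.C (m : K) * (p.derivative * s) := by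
    rw [C_eq_natCast]; ring
  have hn2 : (n : Polynomial K) * p * s.derivative = Polynomial.C (n : K) * (p * s.derivative) := by
    rw [C_eq_natCast]; ring
  rw [hm2, hn2, coeff_C_mul, coeff_C_mul, h1, h2] at hco
  have h3 : (n : K) * s.leadingCoeff * ((m : K) - (d : K)) = 0 := by linear_combination hco
  have hmd : (m : K) - (d : K) ≠ 0 := by
    intro h
    exact absurd (Nat.cast_injective (sub_eq_zero.mp h)) (by omega)
  exact (mul_ne_zero (mul_ne_zero (Nat.cast_ne_zero.mpr (by omega)) hlc) hmd) h3

theorem statement4 (K : Type*) [Field K] [CharZero K] (n m : ℕ)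
    (hn : 1 < n) (hm : 1 < m) (hdvd : n ∣ m ∨ m ∣ n) :
    ¬ ∃ (p q : Polynomial K) (c : K), p.Monic ∧ q.Monic ∧
      p.natDegree = n ∧ q.natDegree = m ∧ c ≠ 0 ∧
      (m : Polynomial K) * p.derivative * q - (n : Polynomial K) * p * q.derivative =
        Polynomial.C c := by
  rintro ⟨p, q, c, hp, hq, hpn, hqm, hc, heq⟩
  rcases hdvd with ⟨k, hk⟩ | ⟨k, hk⟩
  · exact key4 K n m k hn hm hk p q c hp hq hpn hqm hc heq
  · have heq' : (n : Polynomial K) * q.derivative * p - (m : Polynomial K) * q * p.derivative =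
        Polynomial.C (-c) := by
      rw [map_neg]
      linear_combination -heq
    exact key4 K m n k hm hn hk q p (-c) hq hp hqm hpn (neg_ne_zero.2 hc) heq'
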